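/- The number π² + 1 is an eigenvalue of E'(1/2, 0, 0); indeed the vector v = (0, πi, 0, 1, πi) ∈ ℂ⁵ satisfies E'(1/2,0,0)·v = (π² + 1)·v. On the other hand, π² + 1 is not an eigenvalue of E'(0, 1/2, 0) or of E'(0, −1/2, 0). -/
import Mathlib


noncomputable section

/-- The 5×5 complex matrix E'(A₁,B₁,B₂) from the one-form spectrum computation
on Example IV, where S² = A₁² + B₁² + B₂². -/
def Emat' (A1 B1 B2 : ℝ) : Matrix (Fin 5) (Fin 5) ℂ :=
  let p : ℂ := (Real.pi : ℂ)
  let i : ℂ := Complex.I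
  let S2 : ℂ := ((A1 ^ 2 + B1 ^ 2 + B2 ^ 2 : ℝ) : ℂ)
  let a1 : ℂ := (A1 : ℂ)
  let b1 : ℂ := (B1 : ℂ)
  let b2 : ℂ := (B2 : ℂ)
  !![4*p^2*S2, 0, 0, -2*p*i*b1, 0;
     0, 4*p^2*S2, 0, 2*p*i*a1, -2*p*i*b2;
     0, 0, 4*p^2*S2, 0, 2*p*i*b1;
     2*p*i*b1, -2*p*i*a1, 0, 4*p^2*S2 + 1, 2*p*i*a1;
     0, 2*p*i*b2, -2*p*i*b1, -2*p*i*a1, 4*p^2*S2 + 2]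

lemma aux_key (b : ℝ) (hb2 : b ^ 2 = 1/4) (hb : b ≠ 0) (v : Fin 5 → ℂ)
    (h : (Emat' 0 b 0).mulVec v = ((Real.pi : ℂ) ^ 2 + 1) • v) : v = 0 := by
  have hp : (Real.pi : ℂ) ≠ 0 := by
    exact_mod_cast Real.pi_ne_zero
  have hbc : (b : ℂ) ≠ 0 := by exact_mod_cast hb
  have hbc2 : (b : ℂ) ^ 2 = 1/4 := by
    have := congrArg (Complex.ofReal) hb2
    push_cast at this
    simpa using this
  have hpi : ((Real.pi : ℂ) ^ 2 + 1) ≠ 0 := by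
    have h1 : (0:ℝ) < Real.pi ^ 2 + 1 := by positivity
    have := h1.ne'
    intro hc
    apply this
    have : ((Real.pi ^ 2 + 1 : ℝ) : ℂ) = 0 := by push_cast; exact hc
    exact_mod_cast this
  have hpI : (Real.pi : ℂ) * Complex.I * (b:ℂ) ≠ 0 :=
    mul_ne_zero (mul_ne_zero hp Complex.I_ne_zero) hbc
  have h0 := congrFun h 0
  have h1 := congrFun h 1
  have h2 := congrFun h 2
  have h3 := congrFun h 3
  have h4 := congrFun h 4
  simp only [Emat', Matrix.mulVec, dotProduct, Fin.sum_univ_five,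
    Matrix.cons_val', Matrix.cons_val_zero, Matrix.cons_val_one, Matrix.head_cons,
    Matrix.empty_val', Matrix.cons_val_fin_one, Matrix.head_fin_const,
    Matrix.cons_val_two, Matrix.tail_cons, Matrix.cons_val_three, Matrix.cons_val_four,
    Matrix.cons_val_succ, Matrix.of_apply, Pi.smul_apply, smul_eq_mul,
    Complex.ofReal_zero, Complex.ofReal_pow, Complex.ofReal_add] at h0 h1 h2 h3 h4
  rw [hbc2] at h0 h1 h2 h3 h4
  -- v 0 = 0 from h3
  have e0 : v 0 = 0 := by
    have : (Real.pi : ℂ) * Complex.I * (b:ℂ) * v 0 = 0 := by linear_combination h3/2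
    exact (mul_eq_zero.mp this).resolve_left hpI
  have e3 : v 3 = 0 := by
    have : (Real.pi : ℂ) * Complex.I * (b:ℂ) * v 3 = 0 := by
      linear_combination -h0/2 - e0/2
    exact (mul_eq_zero.mp this).resolve_left hpI
  have e1 : v 1 = 0 := by
    have : ((Real.pi : ℂ)^2 + 1) * v 1 - (Real.pi:ℂ)^2 * v 1 = 0 := by linear_combination -h1
    have hv : (1:ℂ) * v 1 = 0 := by linear_combination this
    simpa using hv
  have e4 : v 4 = 0 := by
    have key : ((1:ℂ) - 4 * Complex.I^2 * (Real.pi:ℂ)^2 * (b:ℂ)^2) * v 4 = 0 := by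
      linear_combination h4 - 2*(Real.pi:ℂ)*Complex.I*(b:ℂ) * h2
    rw [Complex.I_sq, hbc2] at key
    have key' : ((Real.pi : ℂ) ^ 2 + 1) * v 4 = 0 := by linear_combination key
    exact (mul_eq_zero.mp key').resolve_left hpi
  have e2 : v 2 = 0 := by
    have : ((Real.pi : ℂ)^2 + 1 - 4*(Real.pi:ℂ)^2*(1/4)) * v 2 = 2*(Real.pi:ℂ)*Complex.I*(b:ℂ) * v 4 := by
      linear_combination -h2
    rw [e4] at this
    have hv : (1:ℂ) * v 2 = 0 := by linear_combination this
    simpa using hv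
  funext i
  fin_cases i <;> simpa using by first | exact e0 | exact e1 | exact e2 | exact e3 | exact e4

/-- π² + 1 is an eigenvalue of E'(1/2,0,0), with eigenvector v = (0, πi, 0, 1, πi);
but π² + 1 is not an eigenvalue of E'(0,1/2,0) or E'(0,−1/2,0). -/
theorem stmt18 :
    (Emat' (1/2) 0 0).mulVec
        ![0, (Real.pi : ℂ) * Complex.I, 0, 1, (Real.pi : ℂ) * Complex.I] =
      ((Real.pi : ℂ) ^ 2 + 1) •
        ![0, (Real.pi : ℂ) * Complex.I, 0, 1, (Real.pi : ℂ) * Complex.I] ∧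
    (![0, (Real.pi : ℂ) * Complex.I, 0, 1, (Real.pi : ℂ) * Complex.I] : Fin 5 → ℂ) ≠ 0 ∧
    (∀ v : Fin 5 → ℂ,
      (Emat' 0 (1/2) 0).mulVec v = ((Real.pi : ℂ) ^ 2 + 1) • v → v = 0) ∧
    (∀ v : Fin 5 → ℂ,
      (Emat' 0 (-(1/2)) 0).mulVec v = ((Real.pi : ℂ) ^ 2 + 1) • v → v = 0) := by

  refine ⟨?_, ?_, fun v h => aux_key (1/2) (by norm_num) (by norm_num) v h,
    fun v h => aux_key (-(1/2)) (by norm_num) (by norm_num) v h⟩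
  · funext i
    fin_cases i <;>
      · simp [Emat', Matrix.mulVec, dotProduct, Fin.sum_univ_five]
        try ring
  · intro hc
    have := congrFun hc 3
    simp at this
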